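/- Fix m ≥ 2 and a hierarchy S of size m, let H^{(m)}_n denote the number of isomorphism classes of hierarchies of size n containing no subhierarchy isomorphic to S, and let ρ_m be the radius of convergence of the real power series H^{(m)}(x) = Σ_{n≥1} H^{(m)}_n xⁿ. Then the series Σ_{n≥1} H^{(m)}_n ρ_mⁿ converges, and the left-hand limit lim_{x→ρ_m⁻} H^{(m)}(x) exists and equals Σ_{n≥1} H^{(m)}_n ρ_mⁿ. -/

import Mathlib

/-- Finite rooted unordered trees, presented with an ordered list of children
(unorderedness is taken care of by the isomorphism relation `RTree.Iso`). -/
inductive RTree : Type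
  | node : List RTree → RTree

/-- The number of leaves (external vertices) of a rooted tree: the *size* of a hierarchy. -/
def RTree.leaves : RTree → ℕ
  | .node [] => 1
  | .node (a :: l) => ((a :: l).attach.map (fun x => RTree.leaves x.1)).sum
decreasing_by
  have := List.sizeOf_lt_of_mem x.2
  simp only [RTree.node.sizeOf_spec]
  omega

/-- A hierarchy: a rooted tree in which no vertex has exactly one child. -/
inductive RTree.IsHierarchy : RTree → Prop
  | node {l : List RTree} : l.length ≠ 1 → (∀ t ∈ l, RTree.IsHierarchy t) →
      RTree.IsHierarchy (.node l)

/-- `s.SubtreeOf t` : `s` is the subtree of `t` rooted at some vertex of `t`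
(that vertex together with all of its descendants). -/
inductive RTree.SubtreeOf : RTree → RTree → Prop
  | refl (t : RTree) : RTree.SubtreeOf t t
  | child {s c : RTree} {l : List RTree} : c ∈ l → RTree.SubtreeOf s c →
      RTree.SubtreeOf s (.node l)

/-- Isomorphism of rooted unordered trees: the children of the two roots can be
matched up bijectively by isomorphisms. -/
inductive RTree.Iso : RTree → RTree → Prop
  | node {l₁ l l₂ : List RTree} (h₁ : List.Forall₂ RTree.Iso l₁ l) (h₂ : l.Perm l₂) :
      RTree.Iso (.node l₁) (.node l₂)

/-- The number of isomorphism classes of hierarchies of size `n` (OEIS A000669). -/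
noncomputable def hierarchyCount (n : ℕ) : ℕ :=
  Nat.card (Quot fun a b : {t : RTree // t.IsHierarchy ∧ t.leaves = n} => RTree.Iso a.1 b.1)

/-- `t` contains no subhierarchy isomorphic to `S`. -/
def RTree.Avoids (t S : RTree) : Prop :=
  ∀ s : RTree, s.SubtreeOf t → ¬ RTree.Iso s S

/-- The number of isomorphism classes of hierarchies of size `n` containing
no subhierarchy isomorphic to `S`. -/
noncomputable def avoidCount (S : RTree) (n : ℕ) : ℕ :=
  Nat.card (Quot fun a b : {t : RTree // t.IsHierarchy ∧ t.leaves = n ∧ t.Avoids S} =>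
    RTree.Iso a.1 b.1)

/-- The radius of convergence of the real power series `∑ₙ aₙ xⁿ`. -/
noncomputable def radiusOf (a : ℕ → ℝ) : ENNReal :=
  (FormalMultilinearSeries.ofScalars ℝ a).radius

namespace RTree

theorem ind' (P : RTree → Prop) (h : ∀ l, (∀ t ∈ l, P t) → P (.node l)) : ∀ t, P t
  | .node l => h l (fun t ht => ind' P h t)
decreasing_by
  have := List.sizeOf_lt_of_mem ht
  simp only [RTree.node.sizeOf_spec]
  omega

theorem leaves_nil : (node []).leaves = 1 := by rw [leaves]

theorem leaves_cons (a : RTree) (l : List RTree) :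
    (node (a :: l)).leaves = ((a :: l).map leaves).sum := by
  rw [leaves]
  congr 1
  simp only [List.attach, List.attachWith, List.map_pmap]
  exact List.pmap_eq_map (fun _ h => h)


theorem one_le_leaves : ∀ t : RTree, 1 ≤ t.leaves := by
  refine ind' _ fun l ih => ?_
  match l with
  | [] => simp [leaves_nil]
  | a :: l =>
    rw [leaves_cons]
    have := ih a (by simp)
    simp only [List.map_cons, List.sum_cons]
    omega

theorem leaves_node_of_ne_nil {l : List RTree} (h : l ≠ []) :
    (node l).leaves = (l.map leaves).sum := by
  match l with
  | [] => exact absurd rfl h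
  | a :: l => exact leaves_cons a l

theorem Iso.refl : ∀ t : RTree, Iso t t := by
  refine ind' _ fun l ih => ?_
  exact Iso.node (List.forall₂_same.2 ih) (List.Perm.refl l)

private theorem forall₂_flip_aux {l₁ l : List RTree}
    (h : List.Forall₂ Iso l₁ l) (ih : ∀ x ∈ l₁, ∀ y, Iso x y → Iso y x) :
    List.Forall₂ Iso l l₁ := by
  induction h with
  | nil => exact List.Forall₂.nil
  | cons h₁ h₂ ih₂ =>
    exact List.Forall₂.cons (ih _ (by simp) _ h₁)
      (ih₂ (fun x hx => ih x (by simp [hx])))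

theorem Iso.symm : ∀ s t : RTree, Iso s t → Iso t s := by
  refine ind' _ fun l₁ ih t h => ?_
  rcases h with @⟨_, l, l₂, h₁, h₂⟩
  have F : List.Forall₂ Iso l l₁ := forall₂_flip_aux h₁ ih
  have : Relation.Comp (List.Forall₂ Iso) List.Perm l₂ l₁ := by
    rw [List.forall₂_comp_perm_eq_perm_comp_forall₂]
    exact ⟨l, h₂.symm, F⟩
  obtain ⟨l', F', P'⟩ := this
  exact Iso.node F' P'

private theorem forall₂_trans_aux : ∀ {l₁ la lx : List RTree},
    List.Forall₂ Iso l₁ la → List.Forall₂ Iso la lx →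
    (∀ x ∈ l₁, ∀ y z, Iso x y → Iso y z → Iso x z) → List.Forall₂ Iso l₁ lx := by
  intro l₁ la lx h₁
  induction h₁ generalizing lx with
  | nil => intro h₂ _; cases h₂; exact .nil
  | cons hab h ihh =>
    intro h₂ htr
    cases h₂ with
    | cons hbc h₂' =>
      exact .cons (htr _ (by simp) _ _ hab hbc)
        (ihh h₂' (fun x hx => htr x (by simp [hx])))

theorem Iso.trans : ∀ s t u : RTree, Iso s t → Iso t u → Iso s u := by
  refine ind' _ fun l₁ ih t u h₁ h₂ => ?_
  rcases h₁ with @⟨_, la, l₂, F₁, P₁⟩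
  rcases h₂ with @⟨_, lb, l₃, F₂, P₂⟩
  have hc : Relation.Comp List.Perm (List.Forall₂ Iso) la lb := ⟨l₂, P₁, F₂⟩
  rw [← List.forall₂_comp_perm_eq_perm_comp_forall₂] at hc
  obtain ⟨lx, Fx, Px⟩ := hc
  exact Iso.node (forall₂_trans_aux F₁ Fx ih) (Px.trans P₂)

private theorem forall₂_leaves_aux : ∀ {l₁ l : List RTree},
    List.Forall₂ Iso l₁ l → (∀ x ∈ l₁, ∀ y, Iso x y → leaves x = leaves y) →
    List.map leaves l₁ = List.map leaves l := by
  intro l₁ l h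
  induction h with
  | nil => intro _; rfl
  | cons hab h ihh =>
    intro hl
    simp only [List.map_cons]
    rw [hl _ (by simp) _ hab, ihh (fun x hx => hl x (by simp [hx]))]

theorem Iso.leaves_eq : ∀ s t : RTree, Iso s t → s.leaves = t.leaves := by
  refine ind' _ fun l₁ ih t h => ?_
  rcases h with @⟨_, l, l₂, F, P⟩
  rcases eq_or_ne l₁ [] with rfl | hne
  · cases F
    rw [(List.Perm.nil_eq P).symm]
  · have hl : l ≠ [] := by
      intro hl; subst hl; cases F; exact hne rfl
    have hl₂ : l₂ ≠ [] := by
      intro hl₂; subst hl₂; exact hl (List.Perm.eq_nil P)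
    rw [leaves_node_of_ne_nil hne, leaves_node_of_ne_nil hl₂,
      forall₂_leaves_aux F ih, List.Perm.sum_eq (P.map leaves)]

theorem sizeOf_list_eq : ∀ l : List RTree, sizeOf l = 1 + l.length + (l.map sizeOf).sum := by
  intro l
  induction l with
  | nil => simp
  | cons a l ih => simp only [List.cons.sizeOf_spec, List.map_cons, List.sum_cons,
      List.length_cons, ih]; omega

private theorem sum_sizeOf_le : ∀ l : List RTree, (∀ t ∈ l, sizeOf t + 4 ≤ 6 * t.leaves) →
    (l.map sizeOf).sum + 4 * l.length ≤ 6 * (l.map leaves).sum := by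
  intro l
  induction l with
  | nil => simp
  | cons a l ih =>
    intro h
    have h1 := h a (by simp)
    have h2 := ih (fun t ht => h t (by simp [ht]))
    simp only [List.map_cons, List.sum_cons, List.length_cons]
    omega

theorem sizeOf_le_of_isHierarchy : ∀ t : RTree, t.IsHierarchy → sizeOf t + 4 ≤ 6 * t.leaves := by
  refine ind' _ fun l ih hh => ?_
  rcases hh with @⟨_, hlen, hch⟩
  rcases eq_or_ne l [] with rfl | hne
  · simp [leaves_nil]
  · have hlen2 : 2 ≤ l.length := by
      rcases l with _ | ⟨a, _ | ⟨b, l⟩⟩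
      · exact absurd rfl hne
      · exact absurd rfl hlen
      · simp only [List.length_cons]; omega
    have hs := sum_sizeOf_le l (fun t ht => ih t ht (hch t ht))
    have : sizeOf (node l) = 1 + sizeOf l := by simp
    rw [this, sizeOf_list_eq, leaves_node_of_ne_nil hne]
    omega

theorem finite_lists {α : Type*} {s : Set α} (hs : s.Finite) :
    ∀ n : ℕ, {l : List α | l.length ≤ n ∧ ∀ x ∈ l, x ∈ s}.Finite := by
  intro n
  induction n with
  | zero =>
    refine Set.Finite.subset (Set.finite_singleton []) ?_
    rintro l ⟨hl, -⟩
    simp_all [List.length_eq_zero_iff.1 (Nat.le_zero.1 hl)]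
  | succ n ih =>
    refine Set.Finite.subset (((hs.image2 List.cons ih).union
      (Set.finite_singleton [])) ) ?_
    rintro (_ | ⟨a, l⟩) ⟨hl, hmem⟩
    · simp
    · left
      exact ⟨a, hmem a (by simp), l, ⟨by simpa using hl, fun x hx => hmem x (by simp [hx])⟩, rfl⟩

theorem two_le_sizeOf (t : RTree) : 2 ≤ sizeOf t := by
  rcases t with ⟨l⟩
  have := sizeOf_list_eq l
  simp only [node.sizeOf_spec]
  omega

theorem finite_sizeOf_le : ∀ N : ℕ, {t : RTree | sizeOf t ≤ N}.Finite := by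
  intro N
  induction N with
  | zero =>
    refine Set.Finite.subset (Set.finite_empty) ?_
    intro t ht
    have := two_le_sizeOf t
    simp only [Set.mem_setOf_eq] at ht
    omega
  | succ N ih =>
    refine Set.Finite.subset ((finite_lists ih (N + 1)).image node) ?_
    rintro ⟨l⟩ ht
    simp only [Set.mem_setOf_eq, node.sizeOf_spec] at ht
    have hsl := sizeOf_list_eq l
    refine ⟨l, ⟨by omega, fun x hx => ?_⟩, rfl⟩
    have : sizeOf x ≤ (l.map sizeOf).sum :=
      List.single_le_sum (fun y _ => Nat.zero_le y) _ (List.mem_map_of_mem (f := sizeOf) hx)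
    simp only [Set.mem_setOf_eq]
    omega

theorem iso_pair_inv {t₁ t₂ u₁ u₂ : RTree}
    (h : Iso (node [t₁, t₂]) (node [u₁, u₂])) :
    (Iso t₁ u₁ ∧ Iso t₂ u₂) ∨ (Iso t₁ u₂ ∧ Iso t₂ u₁) := by
  rcases h with @⟨_, l, _, F, P⟩
  rcases F with _ | @⟨_, v₁, _, _, h₁, F⟩
  rcases F with _ | @⟨_, v₂, _, _, h₂, F⟩
  cases F
  have hm : (v₁ ::ₘ {v₂} : Multiset RTree) = u₁ ::ₘ {u₂} := Multiset.coe_eq_coe.2 P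
  rcases Multiset.cons_eq_cons.1 hm with ⟨rfl, hs⟩ | ⟨hne, cs, hc1, hc2⟩
  · left
    have : v₂ = u₂ := by simpa using hs
    subst this
    exact ⟨h₁, h₂⟩
  · right
    rw [Multiset.singleton_eq_cons_iff] at hc1 hc2
    obtain ⟨rfl, rfl⟩ := hc1
    have : u₂ = v₁ := by simpa using hc2.1
    subst this
    exact ⟨h₁, h₂⟩

theorem subtreeOf_pair_inv {s t₁ t₂ : RTree} (h : s.SubtreeOf (node [t₁, t₂])) :
    s = node [t₁, t₂] ∨ s.SubtreeOf t₁ ∨ s.SubtreeOf t₂ := by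
  rcases h with _ | ⟨hc, hsub⟩
  · exact Or.inl rfl
  · cases hc with
    | head => exact Or.inr (Or.inl hsub)
    | tail _ hc =>
      cases hc with
      | head => exact Or.inr (Or.inr hsub)
      | tail _ hc => cases hc

theorem subtreeOf_leaf_inv {s : RTree} (h : s.SubtreeOf (node [])) : s = node [] := by
  rcases h with _ | ⟨hc, _⟩
  · rfl
  · cases hc

end RTree

namespace RTree

variable (S : RTree)

/-- The subtype of avoiding hierarchies of size `k`. -/
abbrev KT (k : ℕ) : Type := {t : RTree // t.IsHierarchy ∧ t.leaves = k ∧ t.Avoids S}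

/-- Isomorphism relation on `KT`. -/
abbrev relK (k : ℕ) : KT S k → KT S k → Prop := fun a b => Iso a.1 b.1

theorem relK_equivalence (k : ℕ) : Equivalence (relK S k) :=
  ⟨fun x => Iso.refl x.1, fun h => Iso.symm _ _ h, fun h h' => Iso.trans _ _ _ h h'⟩

instance finiteKT (k : ℕ) : Finite (KT S k) := by
  have h : {t : RTree | t.IsHierarchy ∧ t.leaves = k ∧ t.Avoids S}.Finite := by
    refine (finite_sizeOf_le (6 * k)).subset ?_
    rintro t ⟨ht, hl, -⟩
    have := sizeOf_le_of_isHierarchy t ht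
    simp only [Set.mem_setOf_eq]
    omega
  exact h.to_subtype

instance finiteQK (k : ℕ) : Finite (Quot (relK S k)) :=
  Finite.of_surjective (Quot.mk _) (fun q => Quot.exists_rep q)

theorem quot_mk_eq_iff {k : ℕ} (a b : KT S k) :
    Quot.mk (relK S k) a = Quot.mk (relK S k) b ↔ Iso a.1 b.1 := by
  rw [Quot.eq]
  exact (relK_equivalence S k).eqvGen_iff

theorem avoidCount_eq (k : ℕ) : avoidCount S k = Nat.card (Quot (relK S k)) := rfl

theorem card_le_two_mul {α β : Type*} [Finite α] [Finite β] (f : α → β) (g : α → α)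
    (h : ∀ a₁ a₂, f a₁ = f a₂ → a₂ = a₁ ∨ a₂ = g a₁) : Nat.card α ≤ 2 * Nat.card β := by
  classical
  cases nonempty_fintype α
  cases nonempty_fintype β
  rw [Nat.card_eq_fintype_card, Nat.card_eq_fintype_card]
  have h1 : (Finset.univ (α := α)).card ≤ 2 * ((Finset.univ (α := α)).image f).card := by
    refine Finset.card_le_mul_card_image Finset.univ 2 (fun b hb => ?_)
    obtain ⟨a, -, ha⟩ := Finset.mem_image.1 hb
    calc ({x ∈ Finset.univ | f x = b} : Finset α).card
        ≤ ({a, g a} : Finset α).card := by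
          refine Finset.card_le_card ?_
          intro x hx
          simp only [Finset.mem_filter] at hx
          rcases h a x (by rw [hx.2, ha]) with rfl | rfl
          · simp
          · simp
      _ ≤ 2 := Finset.card_insert_le _ _ |>.trans (by simp)
  calc Fintype.card α = (Finset.univ (α := α)).card := rfl
    _ ≤ 2 * ((Finset.univ (α := α)).image f).card := h1
    _ ≤ 2 * Fintype.card β := by
        have := Finset.card_le_card (Finset.subset_univ ((Finset.univ (α := α)).image f))
        simpa using Nat.mul_le_mul_left 2 this

section Combine

variable {S} {n : ℕ} (hn : S.leaves ≠ n)

theorem leaves_pair (t₁ t₂ : RTree) :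
    (node [t₁, t₂]).leaves = t₁.leaves + t₂.leaves := by
  rw [leaves_cons]; simp

/-- Combine two avoiding hierarchies into one of the combined size. -/
def combine {a b : ℕ} (hab : a + b = n) (t₁ : KT S a) (t₂ : KT S b) : KT S n := by
  refine ⟨node [t₁.1, t₂.1], ⟨by simp, ?_⟩, ?_, ?_⟩
  · intro t ht
    cases ht with
    | head => exact t₁.2.1
    | tail _ ht =>
      cases ht with
      | head => exact t₂.2.1
      | tail _ ht => cases ht
  · rw [leaves_pair, t₁.2.2.1, t₂.2.2.1, hab]
  · intro s hs hiso
    rcases subtreeOf_pair_inv hs with rfl | hs | hs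
    · apply hn
      rw [← Iso.leaves_eq _ _ hiso, leaves_pair, t₁.2.2.1, t₂.2.2.1, hab]
    · exact t₁.2.2.2 s hs hiso
    · exact t₂.2.2.2 s hs hiso

theorem combine_iso_left {a b : ℕ} (hab : a + b = n) (t₁ t₁' : KT S a) (t₂ : KT S b)
    (h : Iso t₁.1 t₁'.1) : Iso (combine hn hab t₁ t₂).1 (combine hn hab t₁' t₂).1 :=
  Iso.node (List.Forall₂.cons h (List.Forall₂.cons (Iso.refl t₂.1) List.Forall₂.nil))
    (List.Perm.refl _)

theorem combine_iso_right {a b : ℕ} (hab : a + b = n) (t₁ : KT S a) (t₂ t₂' : KT S b)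
    (h : Iso t₂.1 t₂'.1) : Iso (combine hn hab t₁ t₂).1 (combine hn hab t₁ t₂').1 :=
  Iso.node (List.Forall₂.cons (Iso.refl t₁.1) (List.Forall₂.cons h List.Forall₂.nil))
    (List.Perm.refl _)

/-- Combine on the level of isomorphism classes. -/
def combineQ {a b : ℕ} (hab : a + b = n) :
    Quot (relK S a) → Quot (relK S b) → Quot (relK S n) :=
  Quot.map₂ (combine hn hab)
    (fun t₁ t₂ t₂' h => combine_iso_right hn hab t₁ t₂ t₂' h)
    (fun t₁ t₁' t₂ h => combine_iso_left hn hab t₁ t₁' t₂ h)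

end Combine

theorem nat_card_sigma {ι : Type*} [Fintype ι] (F : ι → Type*) [∀ i, Finite (F i)] :
    Nat.card (Σ i, F i) = ∑ i, Nat.card (F i) := by
  classical
  letI : ∀ i, Fintype (F i) := fun i => Fintype.ofFinite _
  simp only [Nat.card_eq_fintype_card, Fintype.card_sigma]

theorem sum_conv_le_two_mul (S : RTree) {n : ℕ} (hn : S.leaves ≠ n) :
    ∑ a ∈ Finset.range (n + 1), avoidCount S a * avoidCount S (n - a) ≤ 2 * avoidCount S n := by
  classical
  set I := {p : ℕ × ℕ // p ∈ Finset.HasAntidiagonal.antidiagonal n} with hI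
  let A := Σ p : I, Quot (relK S p.1.1) × Quot (relK S p.1.2)
  have hmem : ∀ p : I, p.1.1 + p.1.2 = n := fun p => Finset.HasAntidiagonal.mem_antidiagonal.1 p.2
  let f : A → Quot (relK S n) := fun x => combineQ hn (hmem x.1) x.2.1 x.2.2
  let g : A → A := fun x => ⟨⟨(x.1.1.2, x.1.1.1), by
      rw [Finset.HasAntidiagonal.mem_antidiagonal]; have := hmem x.1; omega⟩, x.2.2, x.2.1⟩
  have key : ∀ a₁ a₂ : A, f a₁ = f a₂ → a₂ = a₁ ∨ a₂ = g a₁ := by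
    rintro ⟨⟨⟨a, b⟩, hp⟩, q₁, q₂⟩ ⟨⟨⟨c, d⟩, hp'⟩, r₁, r₂⟩ hf
    induction q₁ using Quot.ind with | _ t₁ => ?_
    induction q₂ using Quot.ind with | _ t₂ => ?_
    induction r₁ using Quot.ind with | _ u₁ => ?_
    induction r₂ using Quot.ind with | _ u₂ => ?_
    have hab : a + b = n := hmem ⟨(a, b), hp⟩
    have hcd : c + d = n := hmem ⟨(c, d), hp'⟩
    have hf' : Quot.mk (relK S n) (combine hn hab t₁ t₂) =
        Quot.mk (relK S n) (combine hn hcd u₁ u₂) := hf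
    rw [quot_mk_eq_iff] at hf'
    have hf'' : Iso (node [t₁.1, t₂.1]) (node [u₁.1, u₂.1]) := hf'
    have hta : t₁.1.leaves = a := t₁.2.2.1
    have htb : t₂.1.leaves = b := t₂.2.2.1
    have huc : u₁.1.leaves = c := u₁.2.2.1
    have hud : u₂.1.leaves = d := u₂.2.2.1
    rcases iso_pair_inv hf'' with ⟨h₁, h₂⟩ | ⟨h₁, h₂⟩
    · left
      have hca : c = a := by rw [← hta, ← huc, Iso.leaves_eq _ _ h₁]
      have hdb : d = b := by rw [← htb, ← hud, Iso.leaves_eq _ _ h₂]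
      subst hca; subst hdb
      have e1 : Quot.mk (relK S c) u₁ = Quot.mk (relK S c) t₁ :=
        (quot_mk_eq_iff S u₁ t₁).2 (Iso.symm _ _ h₁)
      have e2 : Quot.mk (relK S d) u₂ = Quot.mk (relK S d) t₂ :=
        (quot_mk_eq_iff S u₂ t₂).2 (Iso.symm _ _ h₂)
      exact congrArg (fun z : Quot (relK S c) × Quot (relK S d) =>
        (⟨⟨(c, d), hp⟩, z⟩ : A)) (Prod.ext e1 e2)
    · right
      have hca : c = b := by rw [← htb, ← huc, Iso.leaves_eq _ _ h₂]
      have hdb : d = a := by rw [← hta, ← hud, Iso.leaves_eq _ _ h₁]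
      subst hca; subst hdb
      have e1 : Quot.mk (relK S c) u₁ = Quot.mk (relK S c) t₂ :=
        (quot_mk_eq_iff S u₁ t₂).2 (Iso.symm _ _ h₂)
      have e2 : Quot.mk (relK S d) u₂ = Quot.mk (relK S d) t₁ :=
        (quot_mk_eq_iff S u₂ t₁).2 (Iso.symm _ _ h₁)
      exact congrArg (fun z : Quot (relK S c) × Quot (relK S d) =>
        (⟨⟨(c, d), _⟩, z⟩ : A)) (Prod.ext e1 e2)
  have hcard := card_le_two_mul f g key
  have hA : Nat.card A = ∑ a ∈ Finset.range (n + 1), avoidCount S a * avoidCount S (n - a) := by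
    rw [nat_card_sigma]
    have : ∀ p : I, Nat.card (Quot (relK S p.1.1) × Quot (relK S p.1.2)) =
        avoidCount S p.1.1 * avoidCount S p.1.2 := by
      intro p
      rw [Nat.card_prod, avoidCount_eq, avoidCount_eq]
    rw [Finset.sum_congr rfl (fun p _ => this p)]
    rw [Finset.sum_coe_sort (Finset.HasAntidiagonal.antidiagonal n)
      (fun p => avoidCount S p.1 * avoidCount S p.2)]
    rw [Finset.Nat.sum_antidiagonal_eq_sum_range_succ_mk]
  rw [← hA, avoidCount_eq]
  exact hcard

theorem leaf_hierarchy : (node []).IsHierarchy :=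
  IsHierarchy.node (by simp) (by simp)

theorem exists_avoiding (S : RTree) {n : ℕ} (h1 : 1 ≤ n) (hS1 : S.leaves ≠ 1)
    (hne : S.leaves ≠ n) : Nonempty (KT S n) := by
  rcases eq_or_ne n 1 with rfl | hn1
  · refine ⟨⟨node [], leaf_hierarchy, leaves_nil, ?_⟩⟩
    intro s hs hiso
    rw [subtreeOf_leaf_inv hs] at hiso
    exact hS1 (by rw [← Iso.leaves_eq _ _ hiso, leaves_nil])
  · have h2 : 2 ≤ n := by omega
    have hrep : List.replicate n (node []) ≠ [] := by
      simp [List.replicate_eq_nil_iff]; omega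
    have hlv : (node (List.replicate n (node []))).leaves = n := by
      rw [leaves_node_of_ne_nil hrep, List.map_replicate, leaves_nil, List.sum_replicate]
      simp
    refine ⟨⟨node (List.replicate n (node [])), ?_, hlv, ?_⟩⟩
    · refine IsHierarchy.node (by simpa using hn1) ?_
      intro t ht
      rw [List.eq_of_mem_replicate ht]
      exact leaf_hierarchy
    · intro s hs hiso
      cases hs with
      | refl => exact hne (by rw [← Iso.leaves_eq _ _ hiso, hlv])
      | child hc hsub =>
        rw [List.eq_of_mem_replicate hc] at hsub
        rw [subtreeOf_leaf_inv hsub] at hiso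
        exact hS1 (by rw [← Iso.leaves_eq _ _ hiso, leaves_nil])

theorem one_le_avoidCount (S : RTree) {n : ℕ} (h1 : 1 ≤ n) (hS1 : S.leaves ≠ 1)
    (hne : S.leaves ≠ n) : 1 ≤ avoidCount S n := by
  rw [avoidCount_eq]
  have hne' := (exists_avoiding S h1 hS1 hne).map (Quot.mk (relK S n))
  exact Nat.card_pos

theorem avoidCount_zero (S : RTree) : avoidCount S 0 = 0 := by
  rw [avoidCount_eq]
  have : IsEmpty (KT S 0) := ⟨fun t => by have := one_le_leaves t.1; omega⟩
  have h2 : IsEmpty (Quot (relK S 0)) := ⟨fun q => by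
    obtain ⟨a, -⟩ := Quot.exists_rep q
    exact this.false a⟩
  exact Nat.card_of_isEmpty

end RTree

open Filter Finset

/-- For a hierarchy `S` of size `m ≥ 2` with avoiding counts `H⁽ᵐ⁾ₙ` and radius of
convergence `ρₘ`, the series `∑ₙ H⁽ᵐ⁾ₙ ρₘⁿ` converges, and `H⁽ᵐ⁾(x) → ∑ₙ H⁽ᵐ⁾ₙ ρₘⁿ`
as `x → ρₘ⁻`. -/
theorem avoiding_series_left_limit_at_radius {m : ℕ} (hm : 2 ≤ m) (S : RTree)
    (hS : S.IsHierarchy) (hSm : S.leaves = m) :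
    Summable (fun n => (avoidCount S n : ℝ) *
        ((radiusOf fun n => (avoidCount S n : ℝ)).toReal) ^ n) ∧
      Filter.Tendsto (fun x : ℝ => ∑' n : ℕ, (avoidCount S n : ℝ) * x ^ n)
        (nhdsWithin ((radiusOf fun n => (avoidCount S n : ℝ)).toReal)
          (Set.Iio ((radiusOf fun n => (avoidCount S n : ℝ)).toReal)))
        (nhds (∑' n : ℕ, (avoidCount S n : ℝ) *
          ((radiusOf fun n => (avoidCount S n : ℝ)).toReal) ^ n)) := by
  classical
  set H : ℕ → ℝ := fun n => (avoidCount S n : ℝ) with hH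
  set p := FormalMultilinearSeries.ofScalars ℝ H with hp
  have hrad : radiusOf H = p.radius := rfl
  rw [hrad]
  have Hnonneg : ∀ n, 0 ≤ H n := fun n => Nat.cast_nonneg _
  have hnorm : ∀ n, ‖p n‖ = H n := fun n => by
    rw [hp, FormalMultilinearSeries.ofScalars_norm, Real.norm_eq_abs,
      abs_of_nonneg (Hnonneg n)]
  have H0 : H 0 = 0 := by
    simp only [hH, RTree.avoidCount_zero, Nat.cast_zero]
  have hpos : ∀ n, 1 ≤ n → n ≠ m → 1 ≤ H n := by
    intro n h1 hnm
    have h := RTree.one_le_avoidCount S h1 (by omega) (by omega)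
    simp only [hH]
    exact_mod_cast h
  have hconv : ∀ n, n ≠ m → (∑ k ∈ range (n + 1), H k * H (n - k)) ≤ 2 * H n := by
    intro n hn
    have h := RTree.sum_conv_le_two_mul S (n := n) (by omega)
    calc (∑ k ∈ range (n + 1), H k * H (n - k))
        = ((∑ k ∈ range (n + 1), avoidCount S k * avoidCount S (n - k) : ℕ) : ℝ) := by
          push_cast; rfl
      _ ≤ ((2 * avoidCount S n : ℕ) : ℝ) := by exact_mod_cast h
      _ = 2 * H n := by push_cast; rfl
  have hrad1 : p.radius ≤ 1 := by
    by_contra hcon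
    push_neg at hcon
    have hsum := p.summable_norm_mul_pow (r := 1) (by simpa using hcon)
    have hsum' : Summable H := by
      refine hsum.congr fun n => ?_
      simp [hnorm n]
    have h0 := hsum'.tendsto_atTop_zero
    have hev : ∀ᶠ n in atTop, H n < 1 := h0.eventually (eventually_lt_nhds one_pos)
    rw [Filter.eventually_atTop] at hev
    obtain ⟨N, hN⟩ := hev
    have h1 := hpos (max N (m + 1)) (by omega) (by omega)
    have h2 := hN (max N (m + 1)) (by omega)
    linarith
  have hfin : p.radius ≠ ⊤ := fun h => by rw [h] at hrad1; exact absurd hrad1 (by simp)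
  set R := p.radius.toReal with hR
  have hR0 : 0 ≤ R := ENNReal.toReal_nonneg
  have hR1 : R ≤ 1 := by
    have := ENNReal.toReal_mono (by simp : (1 : ENNReal) ≠ ⊤) hrad1
    simpa using this
  have hsumx : ∀ x : ℝ, 0 ≤ x → x < R → Summable (fun n => H n * x ^ n) := by
    intro x hx hxR
    have hlt : (x.toNNReal : ENNReal) < p.radius := by
      show ENNReal.ofReal x < p.radius
      rw [ENNReal.ofReal_lt_iff_lt_toReal hx hfin]
      exact hxR
    have hs := p.summable_norm_mul_pow hlt
    refine hs.congr fun n => ?_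
    rw [hnorm n, Real.coe_toNNReal x hx]
  rcases eq_or_lt_of_le hR0 with hR0' | hRpos
  · -- R = 0 case
    have hfun : (fun n => H n * R ^ n) = fun _ => (0 : ℝ) := by
      funext n
      rcases Nat.eq_zero_or_pos n with rfl | hn
      · simp [H0]
      · rw [← hR0', zero_pow (by omega), mul_zero]
    have htz : (∑' n, H n * R ^ n) = 0 := by rw [hfun]; exact tsum_zero
    refine ⟨by rw [hfun]; exact summable_zero, ?_⟩
    have hzero : ∀ x : ℝ, x < R → (∑' n, H n * x ^ n) = 0 := by
      intro x hx
      refine tsum_eq_zero_of_not_summable fun hsum => ?_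
      have habs := hsum.abs
      have hsum2 : Summable (fun n => ‖p n‖ * ((|x|).toNNReal : ℝ) ^ n) := by
        refine habs.congr fun n => ?_
        rw [hnorm n, Real.coe_toNNReal _ (abs_nonneg x), abs_mul, abs_pow,
          abs_of_nonneg (Hnonneg n)]
      have hle := p.le_radius_of_summable hsum2
      have hx0 : x < 0 := hx.trans_eq hR0'.symm
      have hrad0 : p.radius = 0 := by
        have h1 : p.radius.toReal = 0 := hR0'.symm
        rcases (ENNReal.toReal_eq_zero_iff _).1 h1 with h | h
        · exact h
        · exact absurd h hfin
      rw [hrad0, nonpos_iff_eq_zero, ENNReal.coe_eq_zero] at hle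
      rw [Real.toNNReal_eq_zero] at hle
      have := abs_pos.2 (ne_of_lt hx0)
      linarith
    rw [htz]
    have hev : (fun x : ℝ => ∑' n, H n * x ^ n) =ᶠ[nhdsWithin R (Set.Iio R)]
        (fun _ => (0 : ℝ)) := by
      filter_upwards [self_mem_nhdsWithin] with x hx
      exact hzero x hx
    exact Tendsto.congr' hev.symm tendsto_const_nhds
  · -- 0 < R case
    set C := ∑ k ∈ range (m + 1), H k * H (m - k) with hCdef
    have hC0 : 0 ≤ C := Finset.sum_nonneg fun k _ => mul_nonneg (Hnonneg k) (Hnonneg _)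
    set B := 1 + Real.sqrt (1 + C) with hBdef
    have hfB : ∀ x : ℝ, 0 ≤ x → x < R → (∑' n, H n * x ^ n) ≤ B := by
      intro x hx hxR
      have hs := hsumx x hx hxR
      have hf0 : 0 ≤ ∑' n, H n * x ^ n :=
        tsum_nonneg fun n => mul_nonneg (Hnonneg n) (pow_nonneg hx n)
      have hx1 : x ≤ 1 := le_of_lt (lt_of_lt_of_le hxR hR1)
      have hsn : Summable fun n => ‖H n * x ^ n‖ := by
        refine hs.congr fun n => ?_
        rw [Real.norm_eq_abs, abs_of_nonneg (mul_nonneg (Hnonneg n) (pow_nonneg hx n))]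
      have hcauchy := tsum_mul_tsum_eq_tsum_sum_range_of_summable_norm hsn hsn
      have hinner : ∀ n, (∑ k ∈ range (n + 1), (H k * x ^ k) * (H (n - k) * x ^ (n - k)))
          = (∑ k ∈ range (n + 1), H k * H (n - k)) * x ^ n := by
        intro n
        rw [Finset.sum_mul]
        refine Finset.sum_congr rfl fun k hk => ?_
        rw [Finset.mem_range] at hk
        have hxx : x ^ k * x ^ (n - k) = x ^ n := by
          rw [← pow_add]; congr 1; omega
        calc (H k * x ^ k) * (H (n - k) * x ^ (n - k))
            = H k * H (n - k) * (x ^ k * x ^ (n - k)) := by ring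
          _ = H k * H (n - k) * x ^ n := by rw [hxx]
      have hind : Summable (fun n => if n = m then C * x ^ m else (0 : ℝ)) := by
        refine summable_of_ne_finset_zero (s := {m}) (fun b hb => ?_)
        simp only [Finset.mem_singleton] at hb
        simp [hb]
      have hsl : Summable (fun n => 2 * (H n * x ^ n)) := hs.mul_left 2
      have hg : Summable (fun n => 2 * (H n * x ^ n) + (if n = m then C * x ^ m else 0)) :=
        hsl.add hind
      have hcp : Summable (fun n => (∑ k ∈ range (n + 1), H k * H (n - k)) * x ^ n) := by
        have := (summable_norm_sum_mul_range_of_summable_norm hsn hsn).of_norm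
        refine this.congr fun n => hinner n
      have hle : (∑' n, H n * x ^ n) * (∑' n, H n * x ^ n)
          ≤ ∑' n, (2 * (H n * x ^ n) + (if n = m then C * x ^ m else 0)) := by
        rw [hcauchy]
        refine Summable.tsum_le_tsum ?_ ?_ hg
        · intro n
          rw [hinner n]
          rcases eq_or_ne n m with rfl | hnm
          · rw [if_pos rfl, ← hCdef]
            have h2 : 0 ≤ 2 * (H n * x ^ n) :=
              mul_nonneg (by norm_num) (mul_nonneg (Hnonneg n) (pow_nonneg hx n))
            linarith
          · rw [if_neg hnm, add_zero, ← mul_assoc]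
            exact mul_le_mul_of_nonneg_right (hconv n hnm) (pow_nonneg hx n)
        · refine Summable.congr hcp fun n => (hinner n).symm
      have htg : (∑' n, (2 * (H n * x ^ n) + (if n = m then C * x ^ m else 0)))
          = 2 * (∑' n, H n * x ^ n) + C * x ^ m := by
        rw [Summable.tsum_add hsl hind]
        congr 1
        · exact tsum_mul_left
        · rw [tsum_eq_sum (s := {m}) (fun b hb => by
            simp only [Finset.mem_singleton] at hb; simp [hb])]
          simp
      have hxm : x ^ m ≤ 1 := pow_le_one₀ hx hx1
      have hxm0 : 0 ≤ x ^ m := pow_nonneg hx m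
      have hquad : (∑' n, H n * x ^ n) * (∑' n, H n * x ^ n)
          ≤ 2 * (∑' n, H n * x ^ n) + C := by
        have := hle.trans_eq htg
        nlinarith
      have hsq := Real.sq_sqrt (show (0 : ℝ) ≤ 1 + C by linarith)
      have hsn0 := Real.sqrt_nonneg (1 + C)
      rw [hBdef]
      nlinarith [hquad, hsq, hsn0]
    have hxev : ∀ᶠ x in nhdsWithin R (Set.Iio R), 0 < x :=
      (eventually_gt_nhds hRpos).filter_mono nhdsWithin_le_nhds
    have hsumR : Summable (fun n => H n * R ^ n) := by
      refine summable_of_sum_range_le (c := B)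
        (fun n => mul_nonneg (Hnonneg n) (pow_nonneg hR0 n)) (fun N => ?_)
      have hcont : Continuous (fun x : ℝ => ∑ k ∈ range N, H k * x ^ k) :=
        continuous_finset_sum _ fun i _ => continuous_const.mul (continuous_pow i)
      have htends : Tendsto (fun x : ℝ => ∑ k ∈ range N, H k * x ^ k)
          (nhdsWithin R (Set.Iio R)) (nhds (∑ k ∈ range N, H k * R ^ k)) :=
        (hcont.continuousAt.tendsto).mono_left nhdsWithin_le_nhds
      refine le_of_tendsto htends ?_
      filter_upwards [self_mem_nhdsWithin, hxev] with x hx hx0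
      calc ∑ k ∈ range N, H k * x ^ k
          ≤ ∑' n, H n * x ^ n := Summable.sum_le_tsum (range N)
            (fun i _ => mul_nonneg (Hnonneg i) (pow_nonneg hx0.le i))
            (hsumx x hx0.le hx)
        _ ≤ B := hfB x hx0.le hx
    refine ⟨hsumR, ?_⟩
    refine tendsto_order.2 ⟨fun a ha => ?_, fun b hb => ?_⟩
    · obtain ⟨N, hN⟩ : ∃ N, a < ∑ k ∈ range N, H k * R ^ k :=
        (hsumR.hasSum.tendsto_sum_nat.eventually (eventually_gt_nhds ha)).exists
      have hcont : Continuous (fun x : ℝ => ∑ k ∈ range N, H k * x ^ k) :=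
        continuous_finset_sum _ fun i _ => continuous_const.mul (continuous_pow i)
      have htends : Tendsto (fun x : ℝ => ∑ k ∈ range N, H k * x ^ k)
          (nhdsWithin R (Set.Iio R)) (nhds (∑ k ∈ range N, H k * R ^ k)) :=
        (hcont.continuousAt.tendsto).mono_left nhdsWithin_le_nhds
      have hev2 := htends.eventually (eventually_gt_nhds hN)
      filter_upwards [hev2, self_mem_nhdsWithin, hxev] with x h1 h2 h3
      calc a < ∑ k ∈ range N, H k * x ^ k := h1
        _ ≤ ∑' n, H n * x ^ n := Summable.sum_le_tsum (range N)
            (fun i _ => mul_nonneg (Hnonneg i) (pow_nonneg h3.le i))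
            (hsumx x h3.le h2)
    · filter_upwards [self_mem_nhdsWithin, hxev] with x h2 h3
      have hle : (∑' n, H n * x ^ n) ≤ ∑' n, H n * R ^ n := by
        refine Summable.tsum_le_tsum (fun n => ?_) (hsumx x h3.le h2) hsumR
        exact mul_le_mul_of_nonneg_left
          (pow_le_pow_left₀ h3.le (le_of_lt h2) n) (Hnonneg n)
      exact lt_of_le_of_lt hle hb
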